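/- Let λ > 0, σ > 0, d > 0, and N_y, N_z ∈ ℕ. Consider a rectangular array with antennas q_{(n_y,n_z)} = (0, (λ/2)·n_y, (λ/2)·n_z) ∈ ℝ³ for n_y ∈ {0,…,N_y−1}, n_z ∈ {0,…,N_z−1}, reference point q₀ = 0, and source parametrized as p(x,θ,φ) = x·(cos φ sin θ, sin φ sin θ, cos θ); define Δd_{n}(x,θ,φ) = ‖p(x,θ,φ) − q_n‖ − x and write ñ² = n_y² + n_z². Then, with all partial derivatives evaluated at (x,θ,φ) = (d, π/2, 0): (i) (4π²/(λ²σ²))·Σ_{n_y,n_z} (∂Δd_n/∂x)² = (4π²/(λ²σ²))·Σ_{n_y,n_z} [8d² + λ²ñ² − 4d·√(4d² + λ²ñ²)]/(4d² + λ²ñ²); (ii) (4π²/(λ²σ²))·Σ_{n_y,n_z} (∂Δd_n/∂θ)² = (4π²/σ²)·Σ_{n_y,n_z} n_z²·d²/(ñ²λ² + 4d²); (iii) (4π²/(λ²σ²))·Σ_{n_y,n_z} (∂Δd_n/∂φ)² = (4π²/σ²)·Σ_{n_y,n_z} n_y²·d²/(ñ²λ² + 4d²). -/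

import Mathlib

open Real

/-- The unit direction vector in ℝ³ with elevation `θ` and azimuth `φ`. -/
noncomputable def u (θ φ : ℝ) : EuclideanSpace ℝ (Fin 3) :=
  (WithLp.equiv 2 (Fin 3 → ℝ)).symm
    ![Real.cos φ * Real.sin θ, Real.sin φ * Real.sin θ, Real.cos θ]

/-- The point of ℝ³ (with the Euclidean norm) with coordinates `x`, `y`, `z`. -/
noncomputable def vec3 (x y z : ℝ) : EuclideanSpace ℝ (Fin 3) :=
  (WithLp.equiv 2 (Fin 3 → ℝ)).symm ![x, y, z]

lemma norm_eq_aux (x θ φ a b : ℝ) :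
    ‖x • u θ φ - vec3 0 a b‖ =
    Real.sqrt ((x * (Real.cos φ * Real.sin θ))^2 + (x * (Real.sin φ * Real.sin θ) - a)^2 +
      (x * Real.cos θ - b)^2) := by
  rw [EuclideanSpace.norm_eq]
  simp [u, vec3, Fin.sum_univ_three, sq_abs]

lemma deriv_x_aux (a b d : ℝ) (hd : 0 < d) :
    deriv (fun x : ℝ => ‖x • u (π/2) 0 - vec3 0 a b‖ - x) d
      = d / Real.sqrt (d^2 + a^2 + b^2) - 1 := by
  have hfun : (fun x : ℝ => ‖x • u (π/2) 0 - vec3 0 a b‖ - x)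
      = fun x : ℝ => Real.sqrt (x^2 + a^2 + b^2) - x := by
    funext x
    rw [norm_eq_aux]
    simp
  rw [hfun]
  have hpos : (0:ℝ) < d^2 + a^2 + b^2 := by positivity
  have h1 : HasDerivAt (fun x : ℝ => x^2 + a^2 + b^2) (2*d) d := by
    have := ((hasDerivAt_pow 2 d).add_const (a^2)).add_const (b^2)
    exact this.congr_deriv (by norm_num)
  have h2 := (h1.sqrt hpos.ne').sub (hasDerivAt_id' d)
  rw [HasDerivAt.deriv (f := fun x : ℝ => Real.sqrt (x^2 + a^2 + b^2) - x) h2]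
  have hs : Real.sqrt (d^2 + a^2 + b^2) > 0 := Real.sqrt_pos.mpr hpos
  field_simp

lemma deriv_theta_aux (a b d : ℝ) (hd : 0 < d) :
    deriv (fun t : ℝ => ‖d • u t 0 - vec3 0 a b‖ - d) (π/2)
      = b * d / Real.sqrt (d^2 + a^2 + b^2) := by
  have hfun : (fun t : ℝ => ‖d • u t 0 - vec3 0 a b‖ - d)
      = fun t : ℝ => Real.sqrt (d^2 + a^2 + b^2 - 2*b*d*Real.cos t) - d := by
    funext t
    rw [norm_eq_aux]
    congr 1
    congr 1
    simp only [Real.cos_zero, Real.sin_zero]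
    linear_combination (d^2) * (Real.sin_sq_add_cos_sq t)
  rw [hfun]
  have hpos : (0:ℝ) < d^2 + a^2 + b^2 - 2*b*d*Real.cos (π/2) := by
    simp [Real.cos_pi_div_two]; positivity
  have h1 : HasDerivAt (fun t : ℝ => d^2 + a^2 + b^2 - 2*b*d*Real.cos t)
      (2*b*d*Real.sin (π/2)) (π/2) := by
    have := ((Real.hasDerivAt_cos (π/2)).const_mul (2*b*d)).const_sub (d^2+a^2+b^2)
    exact this.congr_deriv (by ring)
  have h2 := ((h1.sqrt hpos.ne').sub_const d).deriv
  rw [h2]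
  simp [Real.cos_pi_div_two, Real.sin_pi_div_two]
  have hs : Real.sqrt (d^2 + a^2 + b^2) > 0 := Real.sqrt_pos.mpr (by positivity)
  field_simp

lemma deriv_phi_aux (a b d : ℝ) (hd : 0 < d) :
    deriv (fun s : ℝ => ‖d • u (π/2) s - vec3 0 a b‖ - d) 0
      = -(a * d) / Real.sqrt (d^2 + a^2 + b^2) := by
  have hfun : (fun s : ℝ => ‖d • u (π/2) s - vec3 0 a b‖ - d)
      = fun s : ℝ => Real.sqrt (d^2 + a^2 + b^2 - 2*a*d*Real.sin s) - d := by
    funext s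
    rw [norm_eq_aux]
    congr 1
    congr 1
    simp only [Real.cos_pi_div_two, Real.sin_pi_div_two]
    linear_combination (d^2) * (Real.sin_sq_add_cos_sq s)
  rw [hfun]
  have hpos : (0:ℝ) < d^2 + a^2 + b^2 - 2*a*d*Real.sin 0 := by
    simp [Real.sin_zero]; positivity
  have h1 : HasDerivAt (fun s : ℝ => d^2 + a^2 + b^2 - 2*a*d*Real.sin s)
      (-(2*a*d*Real.cos 0)) 0 := by
    have := ((Real.hasDerivAt_sin 0).const_mul (2*a*d)).const_sub (d^2+a^2+b^2)
    convert this using 1 <;> ring_nf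
  have h2 := ((h1.sqrt hpos.ne').sub_const d).deriv
  rw [h2]
  simp [Real.sin_zero, Real.cos_zero]
  have hs : Real.sqrt (d^2 + a^2 + b^2) > 0 := Real.sqrt_pos.mpr (by positivity)
  field_simp

lemma term1_aux (lam d : ℝ) (hd : 0 < d) (ny nz : ℕ) :
    (d / Real.sqrt (d^2 + (lam/2*ny)^2 + (lam/2*nz)^2) - 1)^2 =
      (8 * d ^ 2 + lam ^ 2 * ((ny : ℝ) ^ 2 + (nz : ℝ) ^ 2) -
        4 * d * Real.sqrt (4 * d ^ 2 + lam ^ 2 * ((ny : ℝ) ^ 2 + (nz : ℝ) ^ 2))) /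
        (4 * d ^ 2 + lam ^ 2 * ((ny : ℝ) ^ 2 + (nz : ℝ) ^ 2)) := by
  have hS : (0:ℝ) < d^2 + (lam/2*ny)^2 + (lam/2*nz)^2 := by positivity
  have h4 : 4 * d ^ 2 + lam ^ 2 * ((ny : ℝ) ^ 2 + (nz : ℝ) ^ 2)
      = 2^2 * (d^2 + (lam/2*ny)^2 + (lam/2*nz)^2) := by ring
  have hsa : Real.sqrt (4 * d ^ 2 + lam ^ 2 * ((ny : ℝ) ^ 2 + (nz : ℝ) ^ 2))
      = 2 * Real.sqrt (d^2 + (lam/2*ny)^2 + (lam/2*nz)^2) := by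
    rw [h4, Real.sqrt_mul (by positivity), Real.sqrt_sq (by norm_num : (0:ℝ) ≤ 2)]
  have hsq : Real.sqrt (d^2 + (lam/2*ny)^2 + (lam/2*nz)^2)
      * Real.sqrt (d^2 + (lam/2*ny)^2 + (lam/2*nz)^2)
      = d^2 + (lam/2*ny)^2 + (lam/2*nz)^2 := Real.mul_self_sqrt hS.le
  have hs : (0:ℝ) < Real.sqrt (d^2 + (lam/2*ny)^2 + (lam/2*nz)^2) := Real.sqrt_pos.mpr hS
  rw [hsa, h4]
  set s := Real.sqrt (d^2 + (lam/2*ny)^2 + (lam/2*nz)^2) with hsdef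
  rw [← hsq]
  field_simp
  linear_combination 4 * hsq

lemma term2_aux (lam d c : ℝ) (hd : 0 < d) (ny nz : ℕ) :
    (lam / 2 * c * d / Real.sqrt (d^2 + (lam/2*ny)^2 + (lam/2*nz)^2))^2 =
      lam^2 * (c ^ 2 * d ^ 2 /
        (((ny : ℝ) ^ 2 + (nz : ℝ) ^ 2) * lam ^ 2 + 4 * d ^ 2)) := by
  have hS : (0:ℝ) < d^2 + (lam/2*ny)^2 + (lam/2*nz)^2 := by positivity
  have h4 : ((ny : ℝ) ^ 2 + (nz : ℝ) ^ 2) * lam ^ 2 + 4 * d ^ 2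
      = 4 * (d^2 + (lam/2*ny)^2 + (lam/2*nz)^2) := by ring
  have hsq : Real.sqrt (d^2 + (lam/2*ny)^2 + (lam/2*nz)^2) ^ 2
      = d^2 + (lam/2*ny)^2 + (lam/2*nz)^2 := Real.sq_sqrt hS.le
  have hs : (0:ℝ) < Real.sqrt (d^2 + (lam/2*ny)^2 + (lam/2*nz)^2) := Real.sqrt_pos.mpr hS
  rw [h4, div_pow, hsq]
  field_simp
  ring

theorem stmt_15 (lam sig d : ℝ) (hlam : 0 < lam) (hsig : 0 < sig) (hd : 0 < d)
    (Ny Nz : ℕ) :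
    (4 * π ^ 2 / (lam ^ 2 * sig ^ 2) *
        ∑ ny ∈ Finset.range Ny, ∑ nz ∈ Finset.range Nz,
          (deriv (fun x : ℝ =>
            ‖x • u (π / 2) 0 - vec3 0 (lam / 2 * ny) (lam / 2 * nz)‖ - x) d) ^ 2 =
      4 * π ^ 2 / (lam ^ 2 * sig ^ 2) *
        ∑ ny ∈ Finset.range Ny, ∑ nz ∈ Finset.range Nz,
          (8 * d ^ 2 + lam ^ 2 * ((ny : ℝ) ^ 2 + (nz : ℝ) ^ 2) -
            4 * d * Real.sqrt (4 * d ^ 2 + lam ^ 2 * ((ny : ℝ) ^ 2 + (nz : ℝ) ^ 2))) /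
            (4 * d ^ 2 + lam ^ 2 * ((ny : ℝ) ^ 2 + (nz : ℝ) ^ 2))) ∧
    (4 * π ^ 2 / (lam ^ 2 * sig ^ 2) *
        ∑ ny ∈ Finset.range Ny, ∑ nz ∈ Finset.range Nz,
          (deriv (fun t : ℝ =>
            ‖d • u t 0 - vec3 0 (lam / 2 * ny) (lam / 2 * nz)‖ - d) (π / 2)) ^ 2 =
      4 * π ^ 2 / sig ^ 2 *
        ∑ ny ∈ Finset.range Ny, ∑ nz ∈ Finset.range Nz,
          (nz : ℝ) ^ 2 * d ^ 2 /
            (((ny : ℝ) ^ 2 + (nz : ℝ) ^ 2) * lam ^ 2 + 4 * d ^ 2)) ∧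
    (4 * π ^ 2 / (lam ^ 2 * sig ^ 2) *
        ∑ ny ∈ Finset.range Ny, ∑ nz ∈ Finset.range Nz,
          (deriv (fun s : ℝ =>
            ‖d • u (π / 2) s - vec3 0 (lam / 2 * ny) (lam / 2 * nz)‖ - d) 0) ^ 2 =
      4 * π ^ 2 / sig ^ 2 *
        ∑ ny ∈ Finset.range Ny, ∑ nz ∈ Finset.range Nz,
          (ny : ℝ) ^ 2 * d ^ 2 /
            (((ny : ℝ) ^ 2 + (nz : ℝ) ^ 2) * lam ^ 2 + 4 * d ^ 2)) := by
  refine ⟨?_, ?_, ?_⟩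
  · congr 1
    refine Finset.sum_congr rfl fun ny _ => Finset.sum_congr rfl fun nz _ => ?_
    rw [deriv_x_aux _ _ _ hd]
    exact term1_aux lam d hd ny nz
  · have key : ∑ ny ∈ Finset.range Ny, ∑ nz ∈ Finset.range Nz,
        (deriv (fun t : ℝ =>
          ‖d • u t 0 - vec3 0 (lam / 2 * ny) (lam / 2 * nz)‖ - d) (π / 2)) ^ 2
        = lam ^ 2 * ∑ ny ∈ Finset.range Ny, ∑ nz ∈ Finset.range Nz,
          (nz : ℝ) ^ 2 * d ^ 2 /
            (((ny : ℝ) ^ 2 + (nz : ℝ) ^ 2) * lam ^ 2 + 4 * d ^ 2) := by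
      rw [Finset.mul_sum]
      refine Finset.sum_congr rfl fun ny _ => ?_
      rw [Finset.mul_sum]
      refine Finset.sum_congr rfl fun nz _ => ?_
      rw [deriv_theta_aux _ _ _ hd]
      have := term2_aux lam d (nz : ℝ) hd ny nz
      rw [← this]
    rw [key]
    field_simp
    exact Finset.sum_congr rfl fun _ _ => Finset.sum_congr rfl fun _ _ => by ring
  · have key : ∑ ny ∈ Finset.range Ny, ∑ nz ∈ Finset.range Nz,
        (deriv (fun s : ℝ =>
          ‖d • u (π / 2) s - vec3 0 (lam / 2 * ny) (lam / 2 * nz)‖ - d) 0) ^ 2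
        = lam ^ 2 * ∑ ny ∈ Finset.range Ny, ∑ nz ∈ Finset.range Nz,
          (ny : ℝ) ^ 2 * d ^ 2 /
            (((ny : ℝ) ^ 2 + (nz : ℝ) ^ 2) * lam ^ 2 + 4 * d ^ 2) := by
      rw [Finset.mul_sum]
      refine Finset.sum_congr rfl fun ny _ => ?_
      rw [Finset.mul_sum]
      refine Finset.sum_congr rfl fun nz _ => ?_
      rw [deriv_phi_aux _ _ _ hd]
      have := term2_aux lam d (ny : ℝ) hd ny nz
      rw [neg_div, neg_sq]
      rw [← this]
    rw [key]
    field_simp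
    exact Finset.sum_congr rfl fun _ _ => Finset.sum_congr rfl fun _ _ => by ring
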